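/- The random Fibonacci subshift X₁ is semi-mixing with respect to S = {ab, ba}: for every ϑ₁-legal word w there exists N such that for all n ≥ N there exists a word u of length n with wu·ab or wu·ba a ϑ₁-legal word. Moreover {ab, ba} is a proper subset of the set of legal words of length 2 (since aa is also legal). -/
import Mathlib


/-- Two-letter alphabet. -/
inductive AB : Type
  | a : AB
  | b : AB
deriving DecidableEq

/-- Extension of a random substitution to words, by setwise concatenation. -/
def substW (θ : AB → Set (List AB)) : List AB → Set (List AB)
  | [] => {[]}
  | x :: w => {u | ∃ v ∈ θ x, ∃ t ∈ substW θ w, u = v ++ t}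

/-- Extension of a random substitution to sets of words. -/
def substS (θ : AB → Set (List AB)) (A : Set (List AB)) : Set (List AB) :=
  ⋃ w ∈ A, substW θ w

/-- Level-`n` inflation words of the letter `x`. -/
def substIter (θ : AB → Set (List AB)) (n : ℕ) (x : AB) : Set (List AB) :=
  (substS θ)^[n] {[x]}

/-- A word is legal if it is a subword of some level-`k` inflation word. -/
def legalW (θ : AB → Set (List AB)) (u : List AB) : Prop :=
  ∃ (k : ℕ) (x : AB), ∃ w ∈ substIter θ k x, u <:+: w

/-- The random Fibonacci substitution a ↦ {ab, ba}, b ↦ {a}. -/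
def randFib : AB → Set (List AB)
  | AB.a => {[AB.a, AB.b], [AB.b, AB.a]}
  | AB.b => {[AB.a]}

namespace RFaux

open AB

/-- Setwise append of two sets of words. -/
def App (A B : Set (List AB)) : Set (List AB) := {r | ∃ u ∈ A, ∃ t ∈ B, r = u ++ t}

lemma mem_App {A B : Set (List AB)} {r : List AB} :
    r ∈ App A B ↔ ∃ u ∈ A, ∃ t ∈ B, r = u ++ t := Iff.rfl

lemma mem_substW_cons {x : AB} {w r : List AB} :
    r ∈ substW randFib (x :: w) ↔ ∃ v ∈ randFib x, ∃ t ∈ substW randFib w, r = v ++ t :=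
  Iff.rfl

lemma mem_substW_nil {r : List AB} : r ∈ substW randFib [] ↔ r = [] := Iff.rfl

notation "I" => substIter randFib

lemma substW_append (u t : List AB) :
    substW randFib (u ++ t) = App (substW randFib u) (substW randFib t) := by
  induction u with
  | nil =>
      ext r
      constructor
      · intro hr; exact ⟨[], rfl, r, hr, rfl⟩
      · rintro ⟨u, hu, s, hs, rfl⟩
        have hu' : u = [] := hu
        subst hu'; simpa using hs
  | cons x u ih =>
      ext r
      constructor
      · intro hr
        obtain ⟨v, hv, s, hs, rfl⟩ := mem_substW_cons.1 hr
        have hs' : s ∈ substW randFib (u ++ t) := hs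
        rw [ih] at hs'
        clear hs
        rename' hs' => hs
        obtain ⟨p, hp, q, hq, rfl⟩ := hs
        exact mem_App.2 ⟨v ++ p, mem_substW_cons.2 ⟨v, hv, p, hp, rfl⟩, q, hq,
          (List.append_assoc v p q).symm⟩
      · intro hr
        obtain ⟨m, hm, q, hq, rfl⟩ := mem_App.1 hr
        obtain ⟨v, hv, p, hp, rfl⟩ := mem_substW_cons.1 hm
        refine mem_substW_cons.2 ⟨v, hv, p ++ q, ?_, List.append_assoc v p q⟩
        show p ++ q ∈ substW randFib (u ++ t)
        rw [ih]
        exact mem_App.2 ⟨p, hp, q, hq, rfl⟩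

lemma substS_singleton (w : List AB) : substS randFib {w} = substW randFib w := by
  simp [substS]

lemma substS_union (A B : Set (List AB)) :
    substS randFib (A ∪ B) = substS randFib A ∪ substS randFib B :=
  Set.biUnion_union A B _

lemma mem_substS {A : Set (List AB)} {r : List AB} :
    r ∈ substS randFib A ↔ ∃ w ∈ A, r ∈ substW randFib w := by
  simp [substS]

lemma substS_App (A B : Set (List AB)) :
    substS randFib (App A B) = App (substS randFib A) (substS randFib B) := by
  ext r
  constructor
  · intro h
    obtain ⟨w, ⟨u, hu, t, ht, rfl⟩, hr⟩ := mem_substS.1 h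
    rw [substW_append] at hr
    obtain ⟨p, hp, q, hq, rfl⟩ := hr
    exact mem_App.2 ⟨p, mem_substS.2 ⟨u, hu, hp⟩, q, mem_substS.2 ⟨t, ht, hq⟩, rfl⟩
  · intro h
    obtain ⟨p, hp, q, hq, rfl⟩ := mem_App.1 h
    obtain ⟨u, hu, hpu⟩ := mem_substS.1 hp
    obtain ⟨t, ht, hqt⟩ := mem_substS.1 hq
    refine mem_substS.2 ⟨u ++ t, ⟨u, hu, t, ht, rfl⟩, ?_⟩
    rw [substW_append]
    exact mem_App.2 ⟨p, hpu, q, hqt, rfl⟩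

lemma iter_union (k : ℕ) (A B : Set (List AB)) :
    (substS randFib)^[k] (A ∪ B) = (substS randFib)^[k] A ∪ (substS randFib)^[k] B := by
  induction k generalizing A B with
  | zero => rfl
  | succ k ih =>
      rw [Function.iterate_succ_apply, Function.iterate_succ_apply,
        Function.iterate_succ_apply, substS_union, ih]

lemma iter_App (k : ℕ) (A B : Set (List AB)) :
    (substS randFib)^[k] (App A B) = App ((substS randFib)^[k] A) ((substS randFib)^[k] B) := by
  induction k generalizing A B with
  | zero => rfl
  | succ k ih =>
      rw [Function.iterate_succ_apply, Function.iterate_succ_apply,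
        Function.iterate_succ_apply, substS_App, ih]

lemma substS_a : substS randFib {[a]} = App {[a]} {[b]} ∪ App {[b]} {[a]} := by
  rw [substS_singleton]
  have h1 : substW randFib [a] = {[a, b], [b, a]} := by
    ext r
    rw [mem_substW_cons]
    constructor
    · rintro ⟨v, hv, t, ht, rfl⟩
      have ht' : t = [] := ht
      subst ht'
      rcases hv with rfl | rfl
      · exact Or.inl (by simp)
      · exact Or.inr (by simp)
    · rintro (rfl | rfl)
      · exact ⟨[a, b], Or.inl rfl, [], rfl, by simp⟩
      · exact ⟨[b, a], Or.inr rfl, [], rfl, by simp⟩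
  rw [h1]
  ext r
  constructor
  · rintro (rfl | rfl)
    · exact Or.inl ⟨[a], rfl, [b], rfl, rfl⟩
    · exact Or.inr ⟨[b], rfl, [a], rfl, rfl⟩
  · rintro (⟨u, hu, t, ht, rfl⟩ | ⟨u, hu, t, ht, rfl⟩)
    · have hu' : u = [a] := hu
      have ht' : t = [b] := ht
      subst hu'; subst ht'; exact Or.inl rfl
    · have hu' : u = [b] := hu
      have ht' : t = [a] := ht
      subst hu'; subst ht'; exact Or.inr rfl

lemma substS_b : substS randFib {[b]} = {[a]} := by
  rw [substS_singleton]
  ext r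
  rw [mem_substW_cons]
  constructor
  · rintro ⟨v, hv, t, ht, rfl⟩
    have hv' : v = [a] := hv
    have ht' : t = [] := ht
    subst hv'; subst ht'; simp
  · rintro rfl
    exact ⟨[a], rfl, [], rfl, by simp⟩

/-- Decomposition of level-(k+1) inflation words of `a`. -/
lemma I_succ_a (k : ℕ) : I (k+1) a = App (I k a) (I k b) ∪ App (I k b) (I k a) := by
  show (substS randFib)^[k+1] {[a]} = _
  rw [Function.iterate_succ_apply, substS_a, iter_union, iter_App, iter_App]
  rfl

/-- Level-(k+1) inflation words of `b` are level-`k` inflation words of `a`. -/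
lemma I_succ_b (k : ℕ) : I (k+1) b = I k a := by
  show (substS randFib)^[k+1] {[b]} = (substS randFib)^[k] {[a]}
  rw [Function.iterate_succ_apply, substS_b]

lemma I_zero (x : AB) : I 0 x = {[x]} := rfl

/-- Lengths of inflation words. -/
lemma len (k : ℕ) :
    (∀ u ∈ I k a, u.length = Nat.fib (k+2)) ∧ (∀ u ∈ I k b, u.length = Nat.fib (k+1)) := by
  induction k with
  | zero =>
      constructor
      · intro u hu
        have hu' : u = [a] := hu
        subst hu'; decide
      · intro u hu
        have hu' : u = [b] := hu
        subst hu'; decide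
  | succ k ih =>
      have hfib : Nat.fib (k+3) = Nat.fib (k+1) + Nat.fib (k+2) := Nat.fib_add_two (n := k+1)
      constructor
      · intro u hu
        rw [I_succ_a] at hu
        show u.length = Nat.fib (k+3)
        rcases hu with ⟨p, hp, q, hq, rfl⟩ | ⟨p, hp, q, hq, rfl⟩
        · rw [List.length_append, ih.1 p hp, ih.2 q hq]; omega
        · rw [List.length_append, ih.2 p hp, ih.1 q hq]; omega
      · intro u hu
        rw [I_succ_b] at hu
        show u.length = Nat.fib (k+2)
        exact ih.1 u hu

/-- Nonemptiness of inflation word sets. -/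
lemma ne (k : ℕ) : (∃ u, u ∈ I k a) ∧ (∃ u, u ∈ I k b) := by
  induction k with
  | zero => exact ⟨⟨[a], rfl⟩, ⟨[b], rfl⟩⟩
  | succ k ih =>
      obtain ⟨⟨u, hu⟩, ⟨t, ht⟩⟩ := ih
      refine ⟨⟨u ++ t, ?_⟩, ⟨u, by rw [I_succ_b]; exact hu⟩⟩
      rw [I_succ_a]; exact Or.inl ⟨u, hu, t, ht, rfl⟩

/-- There is a level-`k` inflation word of `a` ending in `a`. -/
lemma endA (k : ℕ) : ∃ y, y ++ [a] ∈ I k a := by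
  induction k with
  | zero => exact ⟨[], rfl⟩
  | succ k ih =>
      obtain ⟨y, hy⟩ := ih
      obtain ⟨t, ht⟩ := (ne k).2
      refine ⟨t ++ y, ?_⟩
      rw [I_succ_a]
      exact Or.inr ⟨t, ht, y ++ [a], hy, by simp⟩

/-- There is a level-`(k+1)` inflation word of `a` starting with `b`. -/
lemma startB (k : ℕ) : ∃ z, (b :: z) ∈ I (k+1) a := by
  induction k with
  | zero =>
      refine ⟨[a], ?_⟩
      rw [I_succ_a]
      exact Or.inr ⟨[b], rfl, [a], rfl, rfl⟩
  | succ k ih =>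
      obtain ⟨z, hz⟩ := ih
      obtain ⟨t, ht⟩ := (ne (k+1)).2
      refine ⟨z ++ t, ?_⟩
      rw [I_succ_a]
      exact Or.inl ⟨b :: z, hz, t, ht, rfl⟩

def GoodPair (c₁ c₂ : AB) : Prop := (c₁ = a ∧ c₂ = b) ∨ (c₁ = b ∧ c₂ = a)

/-- At every internal offset `o`, some level-`(j+1)` inflation word of `a`
has `ab` or `ba` at positions `o, o+1`. -/
lemma pair (j : ℕ) : ∀ o, o + 2 ≤ Nat.fib (j+3) →
    ∃ y c₁ c₂ z, y ++ [c₁, c₂] ++ z ∈ I (j+1) a ∧ y.length = o ∧ GoodPair c₁ c₂ := by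
  induction j with
  | zero =>
      intro o ho
      have hf : Nat.fib (0+3) = 2 := by decide
      have ho' : o = 0 := by omega
      subst ho'
      refine ⟨[], a, b, [], ?_, rfl, Or.inl ⟨rfl, rfl⟩⟩
      rw [I_succ_a]
      exact Or.inl ⟨[a], rfl, [b], rfl, rfl⟩
  | succ j ih =>
      intro o ho
      have ho4 : o + 2 ≤ Nat.fib (j+4) := ho
      have hfib4 : Nat.fib (j+4) = Nat.fib (j+2) + Nat.fib (j+3) := Nat.fib_add_two (n := j+2)
      have hfib3 : Nat.fib (j+3) = Nat.fib (j+1) + Nat.fib (j+2) := Nat.fib_add_two (n := j+1)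
      have hf1 : 1 ≤ Nat.fib (j+1) := Nat.fib_pos.2 (Nat.succ_pos j)
      rcases le_or_gt (o + 2) (Nat.fib (j+3)) with hle | hlt
      · obtain ⟨y, c₁, c₂, z, hW, hy, hgood⟩ := ih o hle
        obtain ⟨t, ht⟩ := (ne (j+1)).2
        refine ⟨y, c₁, c₂, z ++ t, ?_, hy, hgood⟩
        rw [I_succ_a]
        exact Or.inl ⟨y ++ [c₁, c₂] ++ z, hW, t, ht, by simp⟩
      · have hge : Nat.fib (j+2) ≤ o := by omega
        have hcond : (o - Nat.fib (j+2)) + 2 ≤ Nat.fib (j+3) := by omega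
        obtain ⟨y, c₁, c₂, z, hW, hy, hgood⟩ := ih (o - Nat.fib (j+2)) hcond
        obtain ⟨t, ht⟩ := (ne (j+1)).2
        have htlen : t.length = Nat.fib (j+2) := (len (j+1)).2 t ht
        refine ⟨t ++ y, c₁, c₂, z, ?_, ?_, hgood⟩
        · rw [I_succ_a]
          exact Or.inr ⟨t, ht, y ++ [c₁, c₂] ++ z, hW, by simp⟩
        · rw [List.length_append, htlen, hy]; omega

/-- Continuation-building: after a level-`(j+2)` inflation word of `a`, for every `t`
there is a legal continuation with a good pair at offset `t`. -/
lemma contC : ∀ t j (v : List AB), v ∈ I (j+2) a →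
    ∃ k' y c₁ c₂ z, v ++ (y ++ [c₁, c₂] ++ z) ∈ I k' a ∧ y.length = t ∧ GoodPair c₁ c₂ := by
  intro t
  induction t using Nat.strong_induction_on with
  | _ t ih =>
      intro j v hv
      have hf : 1 ≤ Nat.fib (j+3) := Nat.fib_pos.2 (by omega)
      rcases show t + 2 ≤ Nat.fib (j+3) ∨ t + 1 = Nat.fib (j+3) ∨ Nat.fib (j+3) ≤ t by omega
        with h1 | h2 | h3
      · -- pair fits inside one appended block of level j+1
        obtain ⟨y, c₁, c₂, z, hW, hy, hgood⟩ := pair j t h1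
        have hWb : y ++ [c₁, c₂] ++ z ∈ I (j+2) b := by rw [I_succ_b]; exact hW
        refine ⟨j+3, y, c₁, c₂, z, ?_, hy, hgood⟩
        rw [show j+3 = (j+2)+1 from rfl, I_succ_a]
        exact Or.inl ⟨v, hv, _, hWb, rfl⟩
      · -- straddle case
        obtain ⟨y, hy⟩ := endA (j+1)
        obtain ⟨z, hz⟩ := startB (j+1)
        have hyb : y ++ [a] ∈ I (j+2) b := by rw [I_succ_b]; exact hy
        have hzb : b :: z ∈ I (j+3) b := by rw [show j+3 = (j+2)+1 from rfl, I_succ_b]; exact hz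
        have hylen : (y ++ [a]).length = Nat.fib (j+3) := (len (j+2)).2 _ hyb
        have hv1 : v ++ (y ++ [a]) ∈ I (j+3) a := by
          rw [show j+3 = (j+2)+1 from rfl, I_succ_a]
          exact Or.inl ⟨v, hv, _, hyb, rfl⟩
        refine ⟨j+4, y, a, b, z, ?_, ?_, Or.inl ⟨rfl, rfl⟩⟩
        · have heq : v ++ (y ++ [a, b] ++ z) = (v ++ (y ++ [a])) ++ (b :: z) := by simp
          rw [heq, show j+4 = (j+3)+1 from rfl, I_succ_a]
          exact Or.inl ⟨_, hv1, _, hzb, rfl⟩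
        · rw [List.length_append] at hylen
          simp only [List.length_singleton] at hylen
          omega
      · -- lay down one block of level j+2 and recurse
        obtain ⟨t₁, ht₁⟩ := (ne (j+2)).2
        have ht₁len : t₁.length = Nat.fib (j+3) := (len (j+2)).2 t₁ ht₁
        have hv1 : v ++ t₁ ∈ I (j+3) a := by
          rw [show j+3 = (j+2)+1 from rfl, I_succ_a]
          exact Or.inl ⟨v, hv, t₁, ht₁, rfl⟩
        obtain ⟨k', y, c₁, c₂, z, hmem, hylen, hgood⟩ :=
          ih (t - Nat.fib (j+3)) (by omega) (j+1) (v ++ t₁) hv1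
        refine ⟨k', t₁ ++ y, c₁, c₂, z, ?_, ?_, hgood⟩
        · have heq : v ++ (t₁ ++ y ++ [c₁, c₂] ++ z) = (v ++ t₁) ++ (y ++ [c₁, c₂] ++ z) := by
            simp
          rw [heq]; exact hmem
        · rw [List.length_append, ht₁len, hylen]; omega

/-- Every legal word is an infix of a level-`(k+2)` inflation word of `a`. -/
lemma cover {w : List AB} (h : legalW randFib w) :
    ∃ k v, v ∈ I (k+2) a ∧ w <:+: v := by
  obtain ⟨k, x, v, hv, hinf⟩ := h
  have key : ∃ k₀ v₀, v₀ ∈ I k₀ a ∧ w <:+: v₀ := by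
    cases x with
    | a => exact ⟨k, v, hv, hinf⟩
    | b =>
        cases k with
        | zero =>
            have hv' : v = [b] := hv
            subst hv'
            refine ⟨1, [b, a], ?_, hinf.trans ⟨[], [a], rfl⟩⟩
            rw [show (1:ℕ) = 0 + 1 from rfl, I_succ_a]
            exact Or.inr ⟨[b], rfl, [a], rfl, rfl⟩
        | succ k =>
            rw [I_succ_b] at hv
            exact ⟨k, v, hv, hinf⟩
  obtain ⟨k₀, v₀, hv₀, hinf₀⟩ := key
  obtain ⟨t₁, ht₁⟩ := (ne k₀).2
  obtain ⟨t₂, ht₂⟩ := (ne (k₀+1)).2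
  refine ⟨k₀, v₀ ++ t₁ ++ t₂, ?_, ?_⟩
  · rw [show k₀+2 = (k₀+1)+1 from rfl, I_succ_a]
    refine Or.inl ⟨v₀ ++ t₁, ?_, t₂, ht₂, rfl⟩
    rw [I_succ_a]
    exact Or.inl ⟨v₀, hv₀, t₁, ht₁, rfl⟩
  · have h1 : v₀ <:+: v₀ ++ t₁ ++ t₂ := ⟨[], t₁ ++ t₂, by simp⟩
    exact hinf₀.trans h1

end RFaux

open AB RFaux in
/-- The random Fibonacci subshift is semi-mixing with respect to
`S = {ab, ba}`: for every legal word `w` there is `N` such that for every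
`n ≥ N` there is a word `u` of length `n` with `wuab` or `wuba` legal.
Moreover `{ab, ba}` is a proper subset of the legal words of length 2. -/
theorem randFib_semimixing :
    (∀ w : List AB, legalW randFib w →
      ∃ N : ℕ, ∀ n ≥ N, ∃ u : List AB, u.length = n ∧
        (legalW randFib (w ++ u ++ [AB.a, AB.b]) ∨
         legalW randFib (w ++ u ++ [AB.b, AB.a]))) ∧
    ({[AB.a, AB.b], [AB.b, AB.a]} : Set (List AB)) ⊂
      {v : List AB | v.length = 2 ∧ legalW randFib v} := by
  constructor
  · intro w hw
    obtain ⟨k, v, hv, hinf⟩ := cover hw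
    obtain ⟨p, s, hps⟩ := hinf
    refine ⟨s.length, fun n hn => ?_⟩
    obtain ⟨k', y, c₁, c₂, z, hmem, hylen, hgood⟩ := contC (n - s.length) k v hv
    refine ⟨s ++ y, by rw [List.length_append, hylen]; omega, ?_⟩
    have hinf2 : w ++ (s ++ y) ++ [c₁, c₂] <:+: v ++ (y ++ [c₁, c₂] ++ z) := by
      refine ⟨p, z, ?_⟩
      rw [← hps]
      simp
    have hleg : legalW randFib (w ++ (s ++ y) ++ [c₁, c₂]) := ⟨k', a, _, hmem, hinf2⟩
    rcases hgood with ⟨h1, h2⟩ | ⟨h1, h2⟩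
    · subst h1; subst h2; exact Or.inl hleg
    · subst h1; subst h2; exact Or.inr hleg
  · constructor
    · rintro v (rfl | rfl)
      · refine ⟨rfl, 1, a, [a, b], ?_, List.infix_refl _⟩
        rw [show (1:ℕ) = 0 + 1 from rfl, I_succ_a]
        exact Or.inl ⟨[a], rfl, [b], rfl, rfl⟩
      · refine ⟨rfl, 1, a, [b, a], ?_, List.infix_refl _⟩
        rw [show (1:ℕ) = 0 + 1 from rfl, I_succ_a]
        exact Or.inr ⟨[b], rfl, [a], rfl, rfl⟩
    · intro hsub
      have haa : [a, a] ∈ {v : List AB | v.length = 2 ∧ legalW randFib v} := by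
        refine ⟨rfl, 2, a, [a, a, b], ?_, ⟨[], [b], rfl⟩⟩
        rw [show (2:ℕ) = 1 + 1 from rfl, I_succ_a]
        refine Or.inr ⟨[a], by rw [I_succ_b]; rfl, [a, b], ?_, rfl⟩
        rw [show (1:ℕ) = 0 + 1 from rfl, I_succ_a]
        exact Or.inl ⟨[a], rfl, [b], rfl, rfl⟩
      have hmem := hsub haa
      rcases hmem with h | h
      · exact absurd h (by decide)
      · exact absurd h (by decide)
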